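/- For a parameter ν ≥ 0 define q_ν(x) = √((ν²/16)(x−1)² + x), φ_ν(x) = (ν²/8)(x−1) + (ν/2)·q_ν(x), and ψ_ν(x) = ν²/8 + (ν/4)·((ν²/8)(x−1) + 1)/q_ν(x). Then for every x > 0: (1 + x)·ψ_ν(x)/(1 + φ_ν(x)) = (1 + 1/x)·ψ_ν(1/x)/(1 + φ_ν(1/x)). -/
import Mathlib


noncomputable def q (ν x : ℝ) : ℝ := Real.sqrt ((ν ^ 2 / 16) * (x - 1) ^ 2 + x)

noncomputable def φ (ν x : ℝ) : ℝ := (ν ^ 2 / 8) * (x - 1) + (ν / 2) * q ν x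

noncomputable def ψ (ν x : ℝ) : ℝ :=
  ν ^ 2 / 8 + (ν / 4) * ((ν ^ 2 / 8) * (x - 1) + 1) / q ν x

lemma q_pos (ν x : ℝ) (hx : 0 < x) : 0 < q ν x := by
  apply Real.sqrt_pos.2
  positivity

lemma q_inv (ν x : ℝ) (hx : 0 < x) : q ν (1 / x) = q ν x / x := by
  unfold q
  have h : (ν ^ 2 / 16) * (1 / x - 1) ^ 2 + 1 / x
      = ((ν ^ 2 / 16) * (x - 1) ^ 2 + x) / x ^ 2 := by
    field_simp; ring
  rw [h, Real.sqrt_div (by positivity), Real.sqrt_sq hx.le]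

lemma one_add_phi_pos (ν : ℝ) (hν : 0 ≤ ν) (x : ℝ) (hx : 0 < x) :
    0 < 1 + φ ν x := by
  have hs0 : 0 < q ν x := q_pos ν x hx
  have hs2 : (q ν x) ^ 2 = (ν ^ 2 / 16) * (x - 1) ^ 2 + x :=
    Real.sq_sqrt (by positivity)
  unfold φ
  nlinarith [mul_nonneg hν hs0.le, sq_nonneg (ν / 2 * q ν x - (1 + ν ^ 2 / 8 * (x - 1))),
    sq_nonneg (ν / 2 * q ν x + (1 + ν ^ 2 / 8 * (x - 1))), mul_pos hs0 hs0]

/-- The key symmetry identity used in the proof of the two-player score-ratio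
result for the Alternative model. -/
theorem alternative_symmetry_identity (ν : ℝ) (hν : 0 ≤ ν) (x : ℝ) (hx : 0 < x) :
    (1 + x) * ψ ν x / (1 + φ ν x)
      = (1 + 1 / x) * ψ ν (1 / x) / (1 + φ ν (1 / x)) := by
  have hs0 : 0 < q ν x := q_pos ν x hx
  have h1 : (0:ℝ) < 1 + φ ν x := one_add_phi_pos ν hν x hx
  have h2 : (0:ℝ) < 1 + φ ν (1 / x) := one_add_phi_pos ν hν (1 / x) (by positivity)
  rw [show ψ ν (1/x) = ν ^ 2 / 8 + (ν / 4) * ((ν ^ 2 / 8) * (1/x - 1) + 1) / (q ν x / x) by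
    rw [ψ, q_inv ν x hx]]
  rw [show (1:ℝ) + φ ν (1/x) = 1 + ((ν ^ 2 / 8) * (1/x - 1) + (ν / 2) * (q ν x / x)) by
    rw [φ, q_inv ν x hx]] at h2 ⊢
  rw [ψ, φ] at *
  rw [div_eq_div_iff h1.ne' h2.ne']
  field_simp
  ring
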